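/- Let D be a dyadic family with inheritance coefficient B and f ∈ L¹(X,μ) with |⟨f, ψ^λ_{j,k}⟩| ≤ C·μ(Q_{j,k})^{α+1/2} for all j,k,λ. Then for every J ≥ 1 and all m,n ∈ K_J, |f_{Q_{J,m}} − f_{Q_{J,n}}| ≤ (2C·B^α·√(B(B−1)) / (B^α − (B−1)^α)) · δ_D(Q_{J,m}, Q_{J,n})^α. Hence f belongs to the pixelated Lipschitz class Λ_{δ_D}(α). -/

import Mathlib

open MeasureTheory Set

/-- A dyadic family with inheritance coefficient `B` on a probability space `(X, μ)`:
nested finite partitions `cubes j` of `X` into measurable sets of positive measure,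
`cubes 0 = {univ}`, each cube at level `j+1` strictly contained in a unique cube
(its first ancestor) at level `j`, and `μ(ancestor) ≤ B · μ(child)`. -/
structure DyadicFamily {X : Type*} [MeasurableSpace X] (μ : MeasureTheory.Measure X)
    (B : ℝ) where
  cubes : ℕ → Set (Set X)
  finiteLevel : ∀ j, (cubes j).Finite
  meas : ∀ j, ∀ Q ∈ cubes j, MeasurableSet Q
  zeroth : cubes 0 = {Set.univ}
  cover : ∀ j, ⋃₀ cubes j = Set.univ
  pdisjoint : ∀ j, (cubes j).PairwiseDisjoint id
  posMeasure : ∀ j, ∀ Q ∈ cubes j, 0 < μ Q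
  ancestor : ∀ j, ∀ Q ∈ cubes (j + 1), ∃! P, P ∈ cubes j ∧ Q ⊂ P
  inherit : ∀ j, ∀ Q ∈ cubes (j + 1), ∀ P ∈ cubes j, Q ⊂ P →
    (μ P).toReal ≤ B * (μ Q).toReal
  prob : μ Set.univ = 1

namespace DyadicFamily

variable {X : Type*} [MeasurableSpace X] {μ : MeasureTheory.Measure X} {B : ℝ}

/-- Membership in the dyadic family: `Q` is a cube of some level. -/
def Mem (D : DyadicFamily μ B) (Q : Set X) : Prop := ∃ j, Q ∈ D.cubes j

/-- The offspring of a cube `Q` of level `j`: the cubes of level `j+1`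
strictly contained in `Q` (equivalently, whose first ancestor is `Q`). -/
def offspring (D : DyadicFamily μ B) (j : ℕ) (Q : Set X) : Set (Set X) :=
  {Q' ∈ D.cubes (j + 1) | Q' ⊂ Q}

/-- The pseudo-ultrametric `δ_D(x,y) = inf {μ(Q) : x, y ∈ Q ∈ D}`. -/
noncomputable def delta (D : DyadicFamily μ B) (x y : X) : ℝ :=
  sInf {r : ℝ | ∃ Q, D.Mem Q ∧ x ∈ Q ∧ y ∈ Q ∧ r = (μ Q).toReal}

/-- The distance between two dyadic cubes via the smallest common dyadic ancestor. -/
noncomputable def cubeDist (D : DyadicFamily μ B) (Q₁ Q₂ : Set X) : ℝ :=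
  sInf {r : ℝ | ∃ P, D.Mem P ∧ Q₁ ∪ Q₂ ⊆ P ∧ r = (μ P).toReal}

/-- Mean value of `f` over `Q`. -/
noncomputable def avg (μ : MeasureTheory.Measure X) (f : X → ℝ) (Q : Set X) : ℝ :=
  ((μ Q).toReal)⁻¹ * ∫ x in Q, f x ∂μ

/-- `f` belongs to `V_{j,Q}`: it vanishes outside `Q` and is constant on each
offspring cube of `Q`. -/
def MemV (D : DyadicFamily μ B) (j : ℕ) (Q : Set X) (f : X → ℝ) : Prop :=
  (∀ Q' ∈ D.offspring j Q, ∃ c : ℝ, ∀ x ∈ Q', f x = c) ∧ ∀ x ∉ Q, f x = 0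

open scoped Classical

variable (D : DyadicFamily μ B)

lemma level_eq {j : ℕ} {Q Q' : Set X} (hQ : Q ∈ D.cubes j) (hQ' : Q' ∈ D.cubes j)
    (h : (Q ∩ Q').Nonempty) : Q = Q' := by
  by_contra hne
  exact h.not_disjoint (D.pdisjoint j hQ hQ' hne)

lemma cube_nonempty {j : ℕ} {Q : Set X} (hQ : Q ∈ D.cubes j) : Q.Nonempty :=
  nonempty_of_measure_ne_zero (D.posMeasure j Q hQ).ne'

lemma measure_ne_top {j : ℕ} {Q : Set X} (hQ : Q ∈ D.cubes j) : μ Q ≠ ⊤ := by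
  have : μ Q ≤ 1 := D.prob ▸ measure_mono (subset_univ Q)
  exact (this.trans_lt (by norm_num)).ne

lemma toReal_pos {j : ℕ} {Q : Set X} (hQ : Q ∈ D.cubes j) : 0 < (μ Q).toReal :=
  ENNReal.toReal_pos (D.posMeasure j Q hQ).ne' (D.measure_ne_top hQ)

lemma exists_cube (j : ℕ) (x : X) : ∃ Q ∈ D.cubes j, x ∈ Q := by
  have : x ∈ ⋃₀ D.cubes j := (D.cover j).symm ▸ mem_univ x
  simpa [mem_sUnion] using this

lemma nest {l j : ℕ} {Q P : Set X} (hQ : Q ∈ D.cubes (j + l)) (hP : P ∈ D.cubes j)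
    (h : (Q ∩ P).Nonempty) : Q ⊆ P := by
  induction l generalizing Q with
  | zero => exact (D.level_eq hQ hP h).le
  | succ l ih =>
    obtain ⟨R, ⟨hR, hQR⟩, -⟩ := D.ancestor (j + l) Q hQ
    have hRP : R ⊆ P := ih hR ⟨h.choose, hQR.1 h.choose_spec.1, h.choose_spec.2⟩
    exact hQR.1.trans hRP

lemma nest' {j j' : ℕ} (hj : j ≤ j') {Q P : Set X} (hQ : Q ∈ D.cubes j') (hP : P ∈ D.cubes j)
    (h : (Q ∩ P).Nonempty) : Q ⊆ P := by
  obtain ⟨l, rfl⟩ := Nat.exists_eq_add_of_le hj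
  exact D.nest hQ hP h

lemma mem_offspring_of {j : ℕ} {P Q' : Set X} (hP : P ∈ D.cubes j)
    (hQ' : Q' ∈ D.cubes (j + 1)) (hss : Q' ⊆ P) : Q' ∈ D.offspring j P := by
  obtain ⟨R, ⟨hR, hQR⟩, -⟩ := D.ancestor j Q' hQ'
  have : R = P := D.level_eq hR hP
    ⟨(D.cube_nonempty hQ').choose, hQR.subset (D.cube_nonempty hQ').choose_spec,
      hss (D.cube_nonempty hQ').choose_spec⟩
  exact ⟨hQ', this ▸ hQR⟩

lemma offspring_cover {j : ℕ} {P : Set X} (hP : P ∈ D.cubes j) {x : X} (hx : x ∈ P) :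
    ∃ Q' ∈ D.offspring j P, x ∈ Q' := by
  obtain ⟨Q', hQ', hxQ'⟩ := D.exists_cube (j + 1) x
  have hss : Q' ⊆ P := D.nest (l := 1) hQ' hP ⟨x, hxQ', hx⟩
  exact ⟨Q', D.mem_offspring_of hP hQ' hss, hxQ'⟩

lemma child_lower {j : ℕ} {P Q' : Set X} (hP : P ∈ D.cubes j) (hQ' : Q' ∈ D.offspring j P) :
    (μ P).toReal ≤ B * (μ Q').toReal :=
  D.inherit j Q' hQ'.1 P hP hQ'.2

lemma child_mem {j : ℕ} {P Q' : Set X} (hQ' : Q' ∈ D.offspring j P) : Q' ∈ D.cubes (j + 1) :=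
  hQ'.1

lemma child_subset {j : ℕ} {P Q' : Set X} (hQ' : Q' ∈ D.offspring j P) : Q' ⊆ P :=
  hQ'.2.subset

lemma child_upper (hB : 2 ≤ B) {j : ℕ} {P Q' : Set X} (hP : P ∈ D.cubes j)
    (hQ' : Q' ∈ D.offspring j P) :
    (μ Q').toReal ≤ (1 - 1 / B) * (μ P).toReal := by
  have hB0 : (0:ℝ) < B := by linarith
  obtain ⟨x, hxP, hxQ'⟩ := exists_of_ssubset hQ'.2
  obtain ⟨Q'', hQ'', hxQ''⟩ := D.offspring_cover hP hxP
  have hne : Q' ≠ Q'' := fun h => hxQ' (h ▸ hxQ'')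
  have hd : Disjoint Q' Q'' := D.pdisjoint (j+1) hQ'.1 hQ''.1 hne
  have hsum : μ Q' + μ Q'' ≤ μ P := by
    rw [← measure_union hd (D.meas (j+1) Q'' hQ''.1)]
    exact measure_mono (union_subset hQ'.2.subset hQ''.2.subset)
  have h1 : (μ Q').toReal + (μ Q'').toReal ≤ (μ P).toReal := by
    rw [← ENNReal.toReal_add (D.measure_ne_top hQ'.1) (D.measure_ne_top hQ''.1)]
    exact (ENNReal.toReal_le_toReal
      (by simp [D.measure_ne_top hQ'.1, D.measure_ne_top hQ''.1]) (D.measure_ne_top hP)).2 hsum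
  have h2 : (μ P).toReal ≤ B * (μ Q'').toReal := D.child_lower hP hQ''
  have h3 : (μ P).toReal / B ≤ (μ Q'').toReal := (div_le_iff₀' hB0).2 h2
  have h4 : (1 - 1 / B) * (μ P).toReal = (μ P).toReal - (μ P).toReal / B := by ring
  linarith

/-- The finset of offspring cubes. -/
noncomputable def childF (D : DyadicFamily μ B) (j : ℕ) (P : Set X) : Finset (Set X) :=
  Set.Finite.toFinset
    (show (D.offspring j P).Finite from (D.finiteLevel (j+1)).subset (fun _ h => h.1))

lemma mem_childF {j : ℕ} {P Q' : Set X} : Q' ∈ D.childF j P ↔ Q' ∈ D.offspring j P :=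
  Set.Finite.mem_toFinset _

lemma childF_pdisjoint (j : ℕ) (P : Set X) :
    (↑(D.childF j P) : Set (Set X)).PairwiseDisjoint id := by
  intro a ha b hb hab
  exact D.pdisjoint (j+1) (D.mem_childF.1 ha).1 (D.mem_childF.1 hb).1 hab

lemma biUnion_childF {j : ℕ} {P : Set X} (hP : P ∈ D.cubes j) :
    (⋃ Q' ∈ D.childF j P, Q') = P := by
  apply subset_antisymm
  · exact iUnion₂_subset fun Q' hQ' => (D.mem_childF.1 hQ').2.subset
  · intro x hx
    obtain ⟨Q', hQ', hxQ'⟩ := D.offspring_cover hP hx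
    exact mem_iUnion₂.2 ⟨Q', D.mem_childF.2 hQ', hxQ'⟩

lemma sum_childF_measure {j : ℕ} {P : Set X} (hP : P ∈ D.cubes j) :
    ∑ Q' ∈ D.childF j P, (μ Q').toReal = (μ P).toReal := by
  have h1 : μ (⋃ Q' ∈ D.childF j P, id Q') = ∑ Q' ∈ D.childF j P, μ (id Q') :=
    measure_biUnion_finset (D.childF_pdisjoint j P)
      (fun Q' hQ' => D.meas (j+1) Q' (D.mem_childF.1 hQ').1)
  simp only [id] at h1
  rw [D.biUnion_childF hP] at h1
  rw [h1, ENNReal.toReal_sum (fun Q' hQ' => D.measure_ne_top (D.mem_childF.1 hQ').1)]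

lemma sum_childF_integral {j : ℕ} {P : Set X} (hP : P ∈ D.cubes j) {f : X → ℝ}
    (hf : Integrable f μ) :
    ∑ Q' ∈ D.childF j P, ∫ x in Q', f x ∂μ = ∫ x in P, f x ∂μ := by
  have h1 := integral_biUnion_finset (μ := μ) (f := f) (D.childF j P) (s := fun Q' => Q')
    (fun Q' hQ' => D.meas (j+1) Q' (D.mem_childF.1 hQ').1)
    (fun a ha b hb hab => D.childF_pdisjoint j P ha hb hab)
    (fun Q' _ => hf.integrableOn)
  rw [D.biUnion_childF hP] at h1
  exact h1.symm

lemma card_childF_le (hB : 2 ≤ B) {j : ℕ} {P : Set X} (hP : P ∈ D.cubes j) :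
    ((D.childF j P).card : ℝ) ≤ B := by
  have hB0 : (0:ℝ) < B := by linarith
  have hμP : 0 < (μ P).toReal := D.toReal_pos hP
  have h1 : ∀ Q' ∈ D.childF j P, (μ P).toReal / B ≤ (μ Q').toReal := fun Q' hQ' =>
    (div_le_iff₀' hB0).2 (D.child_lower hP (D.mem_childF.1 hQ'))
  have h2 : ((D.childF j P).card : ℝ) * ((μ P).toReal / B) ≤
      ∑ Q' ∈ D.childF j P, (μ Q').toReal := by
    simpa [nsmul_eq_mul] using Finset.card_nsmul_le_sum (D.childF j P) _ _ h1
  rw [D.sum_childF_measure hP] at h2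
  have h3 : ((D.childF j P).card : ℝ) * (μ P).toReal ≤ B * (μ P).toReal := by
    have := mul_le_mul_of_nonneg_right h2 hB0.le
    calc ((D.childF j P).card : ℝ) * (μ P).toReal
        = ((D.childF j P).card : ℝ) * ((μ P).toReal / B) * B := by field_simp
      _ ≤ (μ P).toReal * B := this
      _ = B * (μ P).toReal := by ring
  exact le_of_mul_le_mul_right h3 hμP

lemma geom_aux (t : ℝ) (ht0 : 0 ≤ t) (ht1 : t < 1) (l : ℕ) :
    ∑ i ∈ Finset.range l, t ^ i ≤ 1 / (1 - t) := by
  have h1 : 0 < 1 - t := by linarith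
  induction l with
  | zero => simpa using (one_div_pos.2 h1).le
  | succ l ih =>
    rw [geom_sum_succ]
    have : t * ∑ i ∈ Finset.range l, t ^ i ≤ t * (1 / (1 - t)) :=
      mul_le_mul_of_nonneg_left ih ht0
    have h2 : t * (1 / (1 - t)) + 1 = 1 / (1 - t) := by field_simp; ring
    linarith

/-- `h` is represented on the children of `P` by constants `e`. -/
def Rep (D : DyadicFamily μ B) (j : ℕ) (P : Set X) (h : X → ℝ) (e : Set X → ℝ) : Prop :=
  ∀ x, h x = ∑ Q' ∈ D.childF j P, if x ∈ Q' then e Q' else 0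

variable {j : ℕ} {P : Set X} {h h₁ h₂ : X → ℝ} {e e₁ e₂ : Set X → ℝ}

lemma rep_eval (hr : D.Rep j P h e) {Q' : Set X} {x : X} (hQ' : Q' ∈ D.childF j P)
    (hx : x ∈ Q') : h x = e Q' := by
  rw [hr x]
  rw [Finset.sum_eq_single_of_mem Q' hQ' (fun R hR hne => ?_), if_pos hx]
  rw [if_neg]
  intro hxR
  exact ((D.childF_pdisjoint j P hR hQ' hne).ne_of_mem hxR hx) rfl

lemma rep_zero (hr : D.Rep j P h e) {x : X} (hx : x ∉ P) : h x = 0 := by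
  rw [hr x]
  exact Finset.sum_eq_zero fun Q' hQ' => if_neg
    (fun hxQ' => hx ((D.mem_childF.1 hQ').2.subset hxQ'))

lemma rep_integrable (hr : D.Rep j P h e) : Integrable h μ := by
  have heq : h = fun x => ∑ Q' ∈ D.childF j P, Set.indicator Q' (fun _ => e Q') x := by
    funext x; rw [hr x]
    exact Finset.sum_congr rfl fun Q' _ => by simp [Set.indicator_apply]
  rw [heq]
  refine integrable_finset_sum _ fun Q' hQ' => ?_
  refine IntegrableOn.integrable_indicator ?_ (D.meas (j+1) Q' (D.mem_childF.1 hQ').1)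
  exact integrableOn_const (D.measure_ne_top (D.mem_childF.1 hQ').1)

lemma rep_integral (hr : D.Rep j P h e) :
    ∫ x, h x ∂μ = ∑ Q' ∈ D.childF j P, e Q' * (μ Q').toReal := by
  have heq : h = fun x => ∑ Q' ∈ D.childF j P, Set.indicator Q' (fun _ => e Q') x := by
    funext x; rw [hr x]
    exact Finset.sum_congr rfl fun Q' _ => by simp [Set.indicator_apply]
  rw [heq, integral_finset_sum]
  · refine Finset.sum_congr rfl fun Q' hQ' => ?_
    rw [integral_indicator_const (e Q') (D.meas (j+1) Q' (D.mem_childF.1 hQ').1)]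
    rw [smul_eq_mul, mul_comm]; rfl
  · intro Q' hQ'
    refine IntegrableOn.integrable_indicator ?_ (D.meas (j+1) Q' (D.mem_childF.1 hQ').1)
    exact integrableOn_const (D.measure_ne_top (D.mem_childF.1 hQ').1)

lemma rep_integral_mul {f : X → ℝ} (hr : D.Rep j P h e) (hf : Integrable f μ) :
    ∫ x, f x * h x ∂μ = ∑ Q' ∈ D.childF j P, e Q' * ∫ x in Q', f x ∂μ := by
  have heq : (fun x => f x * h x) =
      fun x => ∑ Q' ∈ D.childF j P, Set.indicator Q' (fun y => e Q' * f y) x := by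
    funext x; rw [hr x, Finset.mul_sum]
    refine Finset.sum_congr rfl fun Q' _ => ?_
    by_cases hx : x ∈ Q' <;> simp [Set.indicator_apply, hx, mul_comm]
  rw [heq, integral_finset_sum]
  · refine Finset.sum_congr rfl fun Q' hQ' => ?_
    rw [integral_indicator (D.meas (j+1) Q' (D.mem_childF.1 hQ').1), integral_const_mul]
  · intro Q' hQ'
    exact ((hf.const_mul (e Q')).indicator (D.meas (j+1) Q' (D.mem_childF.1 hQ').1))

lemma rep_mul (hP : P ∈ D.cubes j) (hr₁ : D.Rep j P h₁ e₁) (hr₂ : D.Rep j P h₂ e₂) :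
    D.Rep j P (fun x => h₁ x * h₂ x) (fun Q' => e₁ Q' * e₂ Q') := by
  intro x
  have htriv : D.Rep j P
      (fun x => ∑ Q' ∈ D.childF j P, if x ∈ Q' then e₁ Q' * e₂ Q' else 0)
      (fun Q' => e₁ Q' * e₂ Q') := fun _ => rfl
  show h₁ x * h₂ x = ∑ Q' ∈ D.childF j P, if x ∈ Q' then e₁ Q' * e₂ Q' else 0
  by_cases hx : x ∈ P
  · obtain ⟨Q'', hQ'', hxQ''⟩ := D.offspring_cover hP hx
    have hm := D.mem_childF.2 hQ''
    rw [D.rep_eval hr₁ hm hxQ'', D.rep_eval hr₂ hm hxQ'']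
    exact (D.rep_eval htriv hm hxQ'').symm
  · rw [D.rep_zero hr₁ hx, D.rep_zero hr₂ hx, D.rep_zero htriv hx, mul_zero]

lemma memV_rep (hP : P ∈ D.cubes j) (hh : D.MemV j P h) : ∃ e, D.Rep j P h e := by
  choose c hc using hh.1
  refine ⟨fun Q' => if hQ' : Q' ∈ D.offspring j P then c Q' hQ' else 0, fun x => ?_⟩
  set e : Set X → ℝ := fun Q' => if hQ' : Q' ∈ D.offspring j P then c Q' hQ' else 0 with he
  have htriv : D.Rep j P
      (fun x => ∑ Q' ∈ D.childF j P, if x ∈ Q' then e Q' else 0) e := fun _ => rfl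
  show h x = ∑ Q' ∈ D.childF j P, if x ∈ Q' then e Q' else 0
  by_cases hx : x ∈ P
  · obtain ⟨Q'', hQ'', hxQ''⟩ := D.offspring_cover hP hx
    calc h x = c Q'' hQ'' := hc Q'' hQ'' x hxQ''
      _ = e Q'' := by rw [he]; exact (dif_pos hQ'').symm
      _ = _ := (D.rep_eval htriv (D.mem_childF.2 hQ'') hxQ'').symm
  · rw [hh.2 x hx]
    symm
    exact Finset.sum_eq_zero fun Q' hQ' => if_neg
      (fun hxQ' => hx ((D.mem_childF.1 hQ').2.subset hxQ'))

lemma rep_sum {ι : Type*} (s : Finset ι) (a : ι → ℝ) (g : ι → X → ℝ) (e' : ι → Set X → ℝ)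
    (hr : ∀ i ∈ s, D.Rep j P (g i) (e' i)) :
    D.Rep j P (fun x => ∑ i ∈ s, a i * g i x) (fun Q' => ∑ i ∈ s, a i * e' i Q') := by
  intro x
  calc ∑ i ∈ s, a i * g i x
      = ∑ i ∈ s, ∑ Q' ∈ D.childF j P, (if x ∈ Q' then a i * e' i Q' else 0) := by
        refine Finset.sum_congr rfl fun i hi => ?_
        rw [hr i hi x, Finset.mul_sum]
        exact Finset.sum_congr rfl fun Q' _ => by rw [mul_ite, mul_zero]
    _ = ∑ Q' ∈ D.childF j P, ∑ i ∈ s, (if x ∈ Q' then a i * e' i Q' else 0) :=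
        Finset.sum_comm
    _ = ∑ Q' ∈ D.childF j P, (if x ∈ Q' then ∑ i ∈ s, a i * e' i Q' else 0) := by
        refine Finset.sum_congr rfl fun Q' _ => ?_
        split <;> simp

lemma avg_mul {f : X → ℝ} {Q : Set X} (hQ : (μ Q).toReal ≠ 0) :
    avg μ f Q * (μ Q).toReal = ∫ x in Q, f x ∂μ := by
  unfold avg; field_simp

lemma step (hB : 2 ≤ B) {α : ℝ} (hα : 0 < α) {C : ℝ} (hC : 0 ≤ C)
    {f : X → ℝ} (hf : Integrable f μ)
    {dimm : ℕ → Set X → ℕ} {ψ : ℕ → Set X → ℕ → X → ℝ}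
    (hdim : ∀ j, ∀ Q ∈ D.cubes j, dimm j Q + 1 = (D.offspring j Q).ncard)
    (hV : ∀ j, ∀ Q ∈ D.cubes j, ∀ lam < dimm j Q, D.MemV j Q (ψ j Q lam))
    (hzero : ∀ j, ∀ Q ∈ D.cubes j, ∀ lam < dimm j Q, ∫ x, ψ j Q lam x ∂μ = 0)
    (hortho : ∀ j, ∀ Q ∈ D.cubes j, ∀ lam < dimm j Q, ∀ lam' < dimm j Q,
      ∫ x, ψ j Q lam x * ψ j Q lam' x ∂μ = if lam = lam' then 1 else 0)
    (hspan : ∀ j, ∀ Q ∈ D.cubes j, ∀ g : X → ℝ, D.MemV j Q g → (∫ x, g x ∂μ) = 0 →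
      ∃ c : ℕ → ℝ, ∀ x, g x = ∑ lam ∈ Finset.range (dimm j Q), c lam * ψ j Q lam x)
    (hcoeff : ∀ j, ∀ Q ∈ D.cubes j, ∀ lam < dimm j Q,
      |∫ x, f x * ψ j Q lam x ∂μ| ≤ C * (μ Q).toReal ^ (α + 1/2))
    {j : ℕ} {P Qt : Set X} (hP : P ∈ D.cubes j) (hQt : Qt ∈ D.offspring j P) :
    |avg μ f Qt - avg μ f P| ≤ C * Real.sqrt (B * (B - 1)) * (μ P).toReal ^ α := by
  have hB0 : (0:ℝ) < B := by linarith
  set d := dimm j P with hdd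
  set m := (μ P).toReal with hmm
  have hm : 0 < m := D.toReal_pos hP
  -- representations of the Haar functions
  have hψrep : ∀ lam, ∃ e, lam < d → D.Rep j P (ψ j P lam) e := by
    intro lam
    by_cases hlam : lam < d
    · obtain ⟨e, he⟩ := D.memV_rep hP (hV j P hP lam hlam)
      exact ⟨e, fun _ => he⟩
    · exact ⟨0, fun h => absurd h hlam⟩
  choose eψ heψ using hψrep
  -- the projected oscillation function g
  set eg : Set X → ℝ := fun Q' => avg μ f Q' - avg μ f P with heg
  set g : X → ℝ := fun x => ∑ Q' ∈ D.childF j P, if x ∈ Q' then eg Q' else 0 with hg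
  have hgrep : D.Rep j P g eg := fun _ => rfl
  have hgV : D.MemV j P g :=
    ⟨fun Q' hQ' => ⟨eg Q', fun x hx => D.rep_eval hgrep (D.mem_childF.2 hQ') hx⟩,
      fun x hx => D.rep_zero hgrep hx⟩
  have hμQ'ne : ∀ Q' ∈ D.childF j P, (μ Q').toReal ≠ 0 :=
    fun Q' hQ' => (D.toReal_pos (D.mem_childF.1 hQ').1).ne'
  have hgint : ∫ x, g x ∂μ = 0 := by
    rw [D.rep_integral hgrep]
    have h1 : ∀ Q' ∈ D.childF j P,
        eg Q' * (μ Q').toReal = (∫ x in Q', f x ∂μ) - avg μ f P * (μ Q').toReal := by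
      intro Q' hQ'
      rw [heg]
      have := avg_mul (f := f) (hμQ'ne Q' hQ')
      simp only []
      nlinarith [this]
    rw [Finset.sum_congr rfl h1, Finset.sum_sub_distrib, D.sum_childF_integral hP hf,
      ← Finset.mul_sum, D.sum_childF_measure hP, avg_mul hm.ne']
    exact sub_self _
  obtain ⟨c, hc⟩ := hspan j P hP g hgV hgint
  -- integrability of products
  have hψint : ∀ lam, lam < d → ∀ lam', lam' < d →
      Integrable (fun x => ψ j P lam x * ψ j P lam' x) μ := fun lam h lam' h' =>
    D.rep_integrable (D.rep_mul hP (heψ lam h) (heψ lam' h'))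
  -- coefficient identification, part (a)
  have key_a : ∀ lam', lam' < d → ∫ x, g x * ψ j P lam' x ∂μ = c lam' := by
    intro lam' h'
    have h1 : (fun x => g x * ψ j P lam' x) =
        fun x => ∑ lam ∈ Finset.range d, c lam * (ψ j P lam x * ψ j P lam' x) := by
      funext x
      rw [hc x, Finset.sum_mul]
      exact Finset.sum_congr rfl fun lam _ => mul_assoc _ _ _
    rw [h1, integral_finset_sum _ (fun lam hlam =>
      ((hψint lam (Finset.mem_range.1 hlam) lam' h').const_mul _))]
    have h2 : ∀ lam ∈ Finset.range d,
        ∫ x, c lam * (ψ j P lam x * ψ j P lam' x) ∂μ =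
          if lam = lam' then c lam else 0 := by
      intro lam hlam
      rw [integral_const_mul, hortho j P hP lam (Finset.mem_range.1 hlam) lam' h']
      split <;> simp
    rw [Finset.sum_congr rfl h2, Finset.sum_ite_eq' (Finset.range d) lam' c,
      if_pos (Finset.mem_range.2 h')]
  -- coefficient identification, part (b)
  have key_b : ∀ lam', lam' < d →
      ∫ x, g x * ψ j P lam' x ∂μ = ∫ x, f x * ψ j P lam' x ∂μ := by
    intro lam' h'
    have hrψ := heψ lam' h'
    have h1 : ∫ x, g x * ψ j P lam' x ∂μ =
        ∑ Q' ∈ D.childF j P, eg Q' * eψ lam' Q' * (μ Q').toReal :=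
      D.rep_integral (D.rep_mul hP hgrep hrψ)
    have h2 : ∫ x, f x * ψ j P lam' x ∂μ =
        ∑ Q' ∈ D.childF j P, eψ lam' Q' * ∫ x in Q', f x ∂μ :=
      D.rep_integral_mul hrψ hf
    have h3 : ∑ Q' ∈ D.childF j P, eψ lam' Q' * (μ Q').toReal = 0 := by
      rw [← D.rep_integral hrψ]
      exact hzero j P hP lam' h'
    rw [h1, h2, ← sub_eq_zero, ← Finset.sum_sub_distrib]
    have h4 : ∀ Q' ∈ D.childF j P,
        eg Q' * eψ lam' Q' * (μ Q').toReal - eψ lam' Q' * ∫ x in Q', f x ∂μ =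
          (- avg μ f P) * (eψ lam' Q' * (μ Q').toReal) := by
      intro Q' hQ'
      rw [← avg_mul (f := f) (hμQ'ne Q' hQ'), heg]
      ring
    rw [Finset.sum_congr rfl h4, ← Finset.mul_sum, h3, mul_zero]
  have hcnorm : ∀ lam', lam' < d → |c lam'| ≤ C * m ^ (α + 1/2) := by
    intro lam' h'
    rw [← key_a lam' h', key_b lam' h']
    exact hcoeff j P hP lam' h'
  -- point evaluation
  obtain ⟨x₀, hx₀⟩ := D.cube_nonempty hQt.1
  have hQtF : Qt ∈ D.childF j P := D.mem_childF.2 hQt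
  have hΔ : avg μ f Qt - avg μ f P = ∑ lam ∈ Finset.range d, c lam * ψ j P lam x₀ :=
    (D.rep_eval hgrep hQtF hx₀).symm.trans (hc x₀)
  -- the reproducing kernel bound
  set T : ℝ := ∑ lam ∈ Finset.range d, ψ j P lam x₀ * ψ j P lam x₀ with hT
  have hTnonneg : 0 ≤ T := Finset.sum_nonneg fun lam _ => mul_self_nonneg _
  set k : X → ℝ := fun y => ∑ lam ∈ Finset.range d, ψ j P lam x₀ * ψ j P lam y with hk
  set ek : Set X → ℝ := fun Q' => ∑ lam ∈ Finset.range d, ψ j P lam x₀ * eψ lam Q' with hek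
  have hkrep : D.Rep j P k ek :=
    D.rep_sum (Finset.range d) (fun lam => ψ j P lam x₀) (fun lam => ψ j P lam)
      eψ (fun lam hlam => heψ lam (Finset.mem_range.1 hlam))
  have hkself : ∀ lam', lam' < d → ∫ x, ψ j P lam' x * k x ∂μ = ψ j P lam' x₀ := by
    intro lam' h'
    have h1 : (fun x => ψ j P lam' x * k x) =
        fun x => ∑ lam ∈ Finset.range d,
          ψ j P lam x₀ * (ψ j P lam' x * ψ j P lam x) := by
      funext x
      rw [hk]
      simp only []
      rw [Finset.mul_sum]
      exact Finset.sum_congr rfl fun lam _ => by ring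
    rw [h1, integral_finset_sum _ (fun lam hlam =>
      ((hψint lam' h' lam (Finset.mem_range.1 hlam)).const_mul _))]
    have h2 : ∀ lam ∈ Finset.range d,
        ∫ x, ψ j P lam x₀ * (ψ j P lam' x * ψ j P lam x) ∂μ =
          if lam' = lam then ψ j P lam x₀ else 0 := by
      intro lam hlam
      rw [integral_const_mul, hortho j P hP lam' h' lam (Finset.mem_range.1 hlam)]
      split <;> simp
    rw [Finset.sum_congr rfl h2]
    have h3 : ∀ lam ∈ Finset.range d, (if lam' = lam then ψ j P lam x₀ else 0) =
        (if lam = lam' then ψ j P lam x₀ else 0) := by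
      intro lam _
      by_cases hll : lam = lam'
      · simp [hll]
      · rw [if_neg hll, if_neg (fun h => hll h.symm)]
    rw [Finset.sum_congr rfl h3, Finset.sum_ite_eq' (Finset.range d) lam'
      (fun lam => ψ j P lam x₀), if_pos (Finset.mem_range.2 h')]
  have hkk : ∫ x, k x * k x ∂μ = T := by
    have h1 : (fun x => k x * k x) =
        fun x => ∑ lam ∈ Finset.range d, ψ j P lam x₀ * (ψ j P lam x * k x) := by
      funext x
      conv_lhs => rw [hk]
      simp only []
      rw [Finset.sum_mul]
      exact Finset.sum_congr rfl fun lam _ => by ring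
    rw [h1, integral_finset_sum _ (fun lam hlam =>
      ((D.rep_integrable (D.rep_mul hP (heψ lam (Finset.mem_range.1 hlam))
        hkrep)).const_mul _))]
    rw [hT]
    refine Finset.sum_congr rfl fun lam hlam => ?_
    rw [integral_const_mul, hkself lam (Finset.mem_range.1 hlam)]
  have hkx₀ : k x₀ = T := rfl
  have hμQt : 0 < (μ Qt).toReal := D.toReal_pos hQt.1
  have hsetint : ∫ x in Qt, k x * k x ∂μ = T * T * (μ Qt).toReal := by
    have hcongr : ∀ y ∈ Qt, k y * k y = T * T := by
      intro y hy
      rw [show k y = T from (D.rep_eval hkrep hQtF hy).trans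
        ((D.rep_eval hkrep hQtF hx₀).symm.trans hkx₀)]
    rw [setIntegral_congr_fun (D.meas _ _ hQt.1) hcongr, setIntegral_const, smul_eq_mul]
    unfold Measure.real; ring
  have hTT : T * T * (μ Qt).toReal ≤ T := by
    calc T * T * (μ Qt).toReal = ∫ x in Qt, k x * k x ∂μ := hsetint.symm
      _ ≤ ∫ x, k x * k x ∂μ :=
          setIntegral_le_integral (D.rep_integrable (D.rep_mul hP hkrep hkrep))
            (Filter.Eventually.of_forall fun x => mul_self_nonneg _)
      _ = T := hkk
  have hTle : T ≤ B / m := by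
    have hmB : m ≤ B * (μ Qt).toReal := D.child_lower hP hQt
    rcases eq_or_lt_of_le hTnonneg with h0 | hpos
    · rw [← h0]; positivity
    · have h1 : T * (μ Qt).toReal ≤ 1 := by nlinarith
      have h2 : T ≤ 1 / (μ Qt).toReal := by
        rw [le_div_iff₀ hμQt]; exact h1
      have h3 : 1 / (μ Qt).toReal ≤ B / m := by
        rw [div_le_div_iff₀ hμQt hm]; linarith
      linarith
  -- cardinality bound
  have hdB : (d : ℝ) ≤ B - 1 := by
    have h1 : (d : ℕ) + 1 = (D.offspring j P).ncard := hdim j P hP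
    have h2 : (D.offspring j P).ncard = (D.childF j P).card :=
      Set.ncard_eq_toFinset_card _ _
    have h3 := D.card_childF_le hB hP
    rw [h2] at h1
    have : ((d : ℝ) + 1) = ((D.childF j P).card : ℝ) := by exact_mod_cast h1
    linarith
  -- sum of squared coefficients
  have hsumc : ∑ lam ∈ Finset.range d, c lam ^ 2 ≤ (B - 1) * (C * m ^ (α + 1/2)) ^ 2 := by
    have h1 : ∀ lam ∈ Finset.range d, c lam ^ 2 ≤ (C * m ^ (α + 1/2)) ^ 2 := by
      intro lam hlam
      rw [← sq_abs]
      exact pow_le_pow_left₀ (abs_nonneg _) (hcnorm lam (Finset.mem_range.1 hlam)) 2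
    calc ∑ lam ∈ Finset.range d, c lam ^ 2
        ≤ (Finset.range d).card • (C * m ^ (α + 1/2)) ^ 2 :=
          Finset.sum_le_card_nsmul _ _ _ h1
      _ = (d : ℝ) * (C * m ^ (α + 1/2)) ^ 2 := by
          rw [Finset.card_range, nsmul_eq_mul]
      _ ≤ (B - 1) * (C * m ^ (α + 1/2)) ^ 2 :=
          mul_le_mul_of_nonneg_right hdB (sq_nonneg _)
  have hψsq : ∑ lam ∈ Finset.range d, ψ j P lam x₀ ^ 2 = T := by
    rw [hT]
    exact Finset.sum_congr rfl fun lam _ => by rw [pow_two]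
  -- Cauchy–Schwarz and conclusion
  have hCS := Finset.sum_mul_sq_le_sq_mul_sq (Finset.range d) c (fun lam => ψ j P lam x₀)
  have hpow : m ^ (α + 1/2) * m ^ (α + 1/2) = m ^ α * m ^ α * m := by
    rw [← Real.rpow_add hm, ← Real.rpow_add hm,
      show α + 1/2 + (α + 1/2) = (α + α) + 1 by ring, Real.rpow_add hm, Real.rpow_one]
  have hBB : (0:ℝ) ≤ B * (B - 1) := by nlinarith
  have hRHS : 0 ≤ C * Real.sqrt (B * (B - 1)) * m ^ α := by positivity
  have hΔsq : (avg μ f Qt - avg μ f P) ^ 2 ≤ (C * Real.sqrt (B * (B - 1)) * m ^ α) ^ 2 := by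
    rw [hΔ]
    calc (∑ lam ∈ Finset.range d, c lam * ψ j P lam x₀) ^ 2
        ≤ (∑ lam ∈ Finset.range d, c lam ^ 2) *
            ∑ lam ∈ Finset.range d, ψ j P lam x₀ ^ 2 := hCS
      _ ≤ ((B - 1) * (C * m ^ (α + 1/2)) ^ 2) * (B / m) := by
          apply mul_le_mul hsumc (hψsq ▸ hTle) (hψsq ▸ hTnonneg)
            (by nlinarith [sq_nonneg (C * m ^ (α + 1/2))])
      _ = (C * Real.sqrt (B * (B - 1)) * m ^ α) ^ 2 := by
          have hs2 : Real.sqrt (B * (B - 1)) ^ 2 = B * (B - 1) := Real.sq_sqrt hBB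
          have hgoal : ((B - 1) * (C * m ^ (α + 1/2)) ^ 2) * B =
              (C * Real.sqrt (B * (B - 1)) * m ^ α) ^ 2 * m := by
            linear_combination ((B - 1) * B * C ^ 2) * hpow -
              (C ^ 2 * (m ^ α) ^ 2 * m) * hs2
          have h2 : ((B - 1) * (C * m ^ (α + 1/2)) ^ 2) * (B / m) =
              (((B - 1) * (C * m ^ (α + 1/2)) ^ 2) * B) / m := by ring
          rw [h2, hgoal, mul_div_assoc, div_self hm.ne', mul_one]
  calc |avg μ f Qt - avg μ f P| = Real.sqrt ((avg μ f Qt - avg μ f P) ^ 2) :=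
        (Real.sqrt_sq_eq_abs _).symm
    _ ≤ Real.sqrt ((C * Real.sqrt (B * (B - 1)) * m ^ α) ^ 2) := Real.sqrt_le_sqrt hΔsq
    _ = C * Real.sqrt (B * (B - 1)) * m ^ α := Real.sqrt_sq hRHS

lemma chain (hB : 2 ≤ B) {α : ℝ} (hα : 0 < α) {C : ℝ} (hC : 0 ≤ C)
    {f : X → ℝ} (hf : Integrable f μ)
    {dimm : ℕ → Set X → ℕ} {ψ : ℕ → Set X → ℕ → X → ℝ}
    (hdim : ∀ j, ∀ Q ∈ D.cubes j, dimm j Q + 1 = (D.offspring j Q).ncard)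
    (hV : ∀ j, ∀ Q ∈ D.cubes j, ∀ lam < dimm j Q, D.MemV j Q (ψ j Q lam))
    (hzero : ∀ j, ∀ Q ∈ D.cubes j, ∀ lam < dimm j Q, ∫ x, ψ j Q lam x ∂μ = 0)
    (hortho : ∀ j, ∀ Q ∈ D.cubes j, ∀ lam < dimm j Q, ∀ lam' < dimm j Q,
      ∫ x, ψ j Q lam x * ψ j Q lam' x ∂μ = if lam = lam' then 1 else 0)
    (hspan : ∀ j, ∀ Q ∈ D.cubes j, ∀ g : X → ℝ, D.MemV j Q g → (∫ x, g x ∂μ) = 0 →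
      ∃ c : ℕ → ℝ, ∀ x, g x = ∑ lam ∈ Finset.range (dimm j Q), c lam * ψ j Q lam x)
    (hcoeff : ∀ j, ∀ Q ∈ D.cubes j, ∀ lam < dimm j Q,
      |∫ x, f x * ψ j Q lam x ∂μ| ≤ C * (μ Q).toReal ^ (α + 1/2)) :
    ∀ l j : ℕ, ∀ P Q : Set X, P ∈ D.cubes j → Q ∈ D.cubes (j + l) → Q ⊆ P →
      |avg μ f Q - avg μ f P| ≤ (C * Real.sqrt (B * (B - 1)) * (μ P).toReal ^ α) *
        ∑ i ∈ Finset.range l, (((B - 1) / B) ^ α) ^ i := by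
  have hB0 : (0:ℝ) < B := by linarith
  intro l
  induction l with
  | zero =>
    intro j P Q hP hQ _
    have hQP : Q = P := D.level_eq hQ hP
      ⟨(D.cube_nonempty hQ).choose, (D.cube_nonempty hQ).choose_spec,
        ‹Q ⊆ P› (D.cube_nonempty hQ).choose_spec⟩
    rw [hQP]
    simp
  | succ l ih =>
    intro j P Q hP hQ hss
    obtain ⟨x, hx⟩ := D.cube_nonempty hQ
    obtain ⟨Q₁, hQ₁, hxQ₁⟩ := D.exists_cube (j + 1) x
    have hQ' : Q ∈ D.cubes (j + 1 + l) := by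
      rw [show j + 1 + l = j + (l + 1) by omega]; exact hQ
    have hQQ₁ : Q ⊆ Q₁ := D.nest hQ' hQ₁ ⟨x, hx, hxQ₁⟩
    have hQ₁P : Q₁ ⊆ P := D.nest (l := 1) hQ₁ hP ⟨x, hxQ₁, hss hx⟩
    have hQ₁off : Q₁ ∈ D.offspring j P := D.mem_offspring_of hP hQ₁ hQ₁P
    have h1 := D.step hB hα hC hf hdim hV hzero hortho hspan hcoeff hP hQ₁off
    have h2 := ih (j + 1) Q₁ Q hQ₁ hQ' hQQ₁
    set t : ℝ := ((B - 1) / B) ^ α with ht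
    have ht0 : 0 ≤ t := Real.rpow_nonneg (div_nonneg (by linarith) hB0.le) α
    have hsum0 : 0 ≤ ∑ i ∈ Finset.range l, t ^ i :=
      Finset.sum_nonneg fun i _ => pow_nonneg ht0 i
    have hsqrt0 : 0 ≤ Real.sqrt (B * (B - 1)) := Real.sqrt_nonneg _
    have hμ₁ : (μ Q₁).toReal ^ α ≤ t * (μ P).toReal ^ α := by
      calc (μ Q₁).toReal ^ α ≤ ((1 - 1 / B) * (μ P).toReal) ^ α :=
            Real.rpow_le_rpow ENNReal.toReal_nonneg (D.child_upper hB hP hQ₁off) hα.le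
        _ = t * (μ P).toReal ^ α := by
            rw [show (1 - 1 / B) = (B - 1) / B by field_simp,
              Real.mul_rpow (div_nonneg (by linarith) hB0.le) ENNReal.toReal_nonneg]
    have hM0 : (0:ℝ) ≤ C * Real.sqrt (B * (B - 1)) := mul_nonneg hC hsqrt0
    have h2' : |avg μ f Q - avg μ f Q₁| ≤
        (C * Real.sqrt (B * (B - 1)) * (μ P).toReal ^ α) * t *
          ∑ i ∈ Finset.range l, t ^ i := by
      refine h2.trans (mul_le_mul_of_nonneg_right ?_ hsum0)
      calc C * Real.sqrt (B * (B - 1)) * (μ Q₁).toReal ^ α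
          ≤ C * Real.sqrt (B * (B - 1)) * (t * (μ P).toReal ^ α) :=
            mul_le_mul_of_nonneg_left hμ₁ hM0
        _ = C * Real.sqrt (B * (B - 1)) * (μ P).toReal ^ α * t := by ring
    calc |avg μ f Q - avg μ f P|
        ≤ |avg μ f Q - avg μ f Q₁| + |avg μ f Q₁ - avg μ f P| := abs_sub_le _ _ _
      _ ≤ (C * Real.sqrt (B * (B - 1)) * (μ P).toReal ^ α) * t *
            (∑ i ∈ Finset.range l, t ^ i) +
          C * Real.sqrt (B * (B - 1)) * (μ P).toReal ^ α := add_le_add h2' h1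
      _ = (C * Real.sqrt (B * (B - 1)) * (μ P).toReal ^ α) *
            ∑ i ∈ Finset.range (l + 1), t ^ i := by
          rw [geom_sum_succ]; ring

end DyadicFamily

/-- If the generalized Haar coefficients of `f ∈ L¹` satisfy the
power law `|⟨f, ψ^λ_{j,k}⟩| ≤ C μ(Q_{j,k})^{α+1/2}` for all `j, k, λ`, then for every
level `J ≥ 1` and all cubes `Q_{J,m}, Q_{J,n}` of level `J`,
`|f_{Q_{J,m}} − f_{Q_{J,n}}| ≤ (2C B^α √(B(B−1)) / (B^α − (B−1)^α)) δ_D(Q_{J,m},Q_{J,n})^α`,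
i.e. `f` belongs to the pixelated Lipschitz class `Λ_{δ_D}(α)`. -/
theorem pixelated_lipschitz_of_haar_coeff {X : Type*} [MeasurableSpace X]
    {μ : MeasureTheory.Measure X} {B : ℝ} (hB : 2 ≤ B) (D : DyadicFamily μ B)
    (α : ℝ) (hα : 0 < α) (C : ℝ) (hC : 0 < C)
    (f : X → ℝ) (hf : MeasureTheory.Integrable f μ)
    (dimm : ℕ → Set X → ℕ) (ψ : ℕ → Set X → ℕ → X → ℝ)
    (hdim : ∀ j, ∀ Q ∈ D.cubes j, dimm j Q + 1 = (D.offspring j Q).ncard)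
    (hV : ∀ j, ∀ Q ∈ D.cubes j, ∀ lam < dimm j Q, D.MemV j Q (ψ j Q lam))
    (hzero : ∀ j, ∀ Q ∈ D.cubes j, ∀ lam < dimm j Q, ∫ x, ψ j Q lam x ∂μ = 0)
    (hortho : ∀ j, ∀ Q ∈ D.cubes j, ∀ lam < dimm j Q, ∀ lam' < dimm j Q,
      ∫ x, ψ j Q lam x * ψ j Q lam' x ∂μ = if lam = lam' then 1 else 0)
    (hspan : ∀ j, ∀ Q ∈ D.cubes j, ∀ g : X → ℝ, D.MemV j Q g → (∫ x, g x ∂μ) = 0 →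
      ∃ c : ℕ → ℝ, ∀ x, g x = ∑ lam ∈ Finset.range (dimm j Q), c lam * ψ j Q lam x)
    (hcoeff : ∀ j, ∀ Q ∈ D.cubes j, ∀ lam < dimm j Q,
      |∫ x, f x * ψ j Q lam x ∂μ| ≤ C * (μ Q).toReal ^ (α + 1/2)) :
    ∀ J : ℕ, 1 ≤ J → ∀ Qm ∈ D.cubes J, ∀ Qn ∈ D.cubes J,
      |DyadicFamily.avg μ f Qm - DyadicFamily.avg μ f Qn| ≤
        (2 * C * B ^ α * Real.sqrt (B * (B - 1)) / (B ^ α - (B - 1) ^ α)) *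
          D.cubeDist Qm Qn ^ α := by
  intro J _ Qm hQm Qn hQn
  have hB0 : (0:ℝ) < B := by linarith
  set s : Set ℝ := {r : ℝ | ∃ P, D.Mem P ∧ Qm ∪ Qn ⊆ P ∧ r = (μ P).toReal} with hs
  have hcd : D.cubeDist Qm Qn = sInf s := rfl
  set T : Set (Set X) := {P : Set X | (∃ j, j ≤ J ∧ P ∈ D.cubes j) ∧ Qm ∪ Qn ⊆ P} with hT
  have hTfin : T.Finite := by
    refine Set.Finite.subset (Set.Finite.biUnion (Set.finite_Iic J)
      (fun j _ => D.finiteLevel j)) ?_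
    rintro P ⟨⟨j, hjJ, hPj⟩, -⟩
    exact Set.mem_biUnion hjJ hPj
  have huniv : Set.univ ∈ T := ⟨⟨0, Nat.zero_le J, by rw [D.zeroth]; rfl⟩, subset_univ _⟩
  have hsupset : (fun P => (μ P).toReal) '' T ⊆ s := by
    rintro r ⟨P, ⟨⟨j', _, hPj'⟩, hss⟩, rfl⟩
    exact ⟨P, ⟨j', hPj'⟩, hss, rfl⟩
  have hsub : s ⊆ (fun P => (μ P).toReal) '' T := by
    rintro r ⟨P, ⟨j', hPj'⟩, hssP, rfl⟩
    by_cases hj' : j' ≤ J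
    · exact ⟨P, ⟨⟨j', hj', hPj'⟩, hssP⟩, rfl⟩
    · have hQmP : Qm ⊆ P := (union_subset_iff.1 hssP).1
      obtain ⟨x, hx⟩ := D.cube_nonempty hQm
      have hPQm : P ⊆ Qm := D.nest' (le_of_not_ge hj') hPj' hQm ⟨x, hQmP hx, hx⟩
      have hPeq : P = Qm := subset_antisymm hPQm hQmP
      exact ⟨Qm, ⟨⟨J, le_rfl, hQm⟩, hPeq ▸ hssP⟩, by rw [hPeq]⟩
  have hsne : s.Nonempty := ⟨(μ Set.univ).toReal, hsupset ⟨Set.univ, huniv, rfl⟩⟩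
  have hsfin : s.Finite := (hTfin.image _).subset hsub
  obtain ⟨P₀, ⟨⟨j₀, hj₀J, hP₀⟩, hss₀⟩, hμ₀⟩ := hsub (hsne.csInf_mem hsfin)
  obtain ⟨l, hl⟩ := Nat.exists_eq_add_of_le hj₀J
  have hchain := D.chain hB hα hC.le hf hdim hV hzero hortho hspan hcoeff l j₀
  have hcm := hchain P₀ Qm hP₀ (hl ▸ hQm) (union_subset_iff.1 hss₀).1
  have hcn := hchain P₀ Qn hP₀ (hl ▸ hQn) (union_subset_iff.1 hss₀).2
  set t : ℝ := ((B - 1) / B) ^ α with ht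
  have ht0 : 0 ≤ t := Real.rpow_nonneg (div_nonneg (by linarith) hB0.le) α
  have ht1 : t < 1 := Real.rpow_lt_one (div_nonneg (by linarith) hB0.le)
    ((div_lt_one hB0).2 (by linarith)) hα
  have hgeom := DyadicFamily.geom_aux t ht0 ht1 l
  have hm₀ : 0 < (μ P₀).toReal := D.toReal_pos hP₀
  have hM0 : (0:ℝ) ≤ C * Real.sqrt (B * (B - 1)) * (μ P₀).toReal ^ α := by positivity
  have hBα : (0:ℝ) < B ^ α := Real.rpow_pos_of_pos hB0 α
  have hdiff : (0:ℝ) < B ^ α - (B - 1) ^ α :=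
    sub_pos.2 (Real.rpow_lt_rpow (by linarith) (by linarith) hα)
  have h1t : 1 - t = (B ^ α - (B - 1) ^ α) / B ^ α := by
    rw [ht, Real.div_rpow (by linarith) hB0.le]
    field_simp
  have hbound : |DyadicFamily.avg μ f Qm - DyadicFamily.avg μ f Qn| ≤
      2 * (C * Real.sqrt (B * (B - 1)) * (μ P₀).toReal ^ α) * (1 / (1 - t)) := by
    have hle : ∀ r : ℝ, |r - DyadicFamily.avg μ f P₀| ≤
        C * Real.sqrt (B * (B - 1)) * (μ P₀).toReal ^ α *
          ∑ i ∈ Finset.range l, t ^ i →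
        |r - DyadicFamily.avg μ f P₀| ≤
        C * Real.sqrt (B * (B - 1)) * (μ P₀).toReal ^ α * (1 / (1 - t)) :=
      fun r h => h.trans (mul_le_mul_of_nonneg_left hgeom hM0)
    calc |DyadicFamily.avg μ f Qm - DyadicFamily.avg μ f Qn|
        ≤ |DyadicFamily.avg μ f Qm - DyadicFamily.avg μ f P₀| +
          |DyadicFamily.avg μ f Qn - DyadicFamily.avg μ f P₀| := by
          rw [abs_sub_comm (DyadicFamily.avg μ f Qn)]
          exact abs_sub_le _ _ _
      _ ≤ C * Real.sqrt (B * (B - 1)) * (μ P₀).toReal ^ α * (1 / (1 - t)) +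
          C * Real.sqrt (B * (B - 1)) * (μ P₀).toReal ^ α * (1 / (1 - t)) :=
          add_le_add (hle _ hcm) (hle _ hcn)
      _ = 2 * (C * Real.sqrt (B * (B - 1)) * (μ P₀).toReal ^ α) * (1 / (1 - t)) := by
          ring
  have hfinal : 2 * (C * Real.sqrt (B * (B - 1)) * (μ P₀).toReal ^ α) * (1 / (1 - t)) =
      (2 * C * B ^ α * Real.sqrt (B * (B - 1)) / (B ^ α - (B - 1) ^ α)) *
        D.cubeDist Qm Qn ^ α := by
    rw [hcd, ← hμ₀, h1t]
    field_simp
  exact hbound.trans_eq hfinal
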